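/- Let d ≥ 2, fix a unit vector u ∈ S^{d−1}, and let x, y, z be independent random vectors, each distributed according to σ_d. Then for all Borel sets A, B ⊆ ℝ: Pr[⟨x, y⟩ ∈ A and x ≠ y and ⟨(x − y)/‖x − y‖, z⟩ ∈ B] = Pr[⟨x, y⟩ ∈ A] · σ_d({w ∈ S^{d−1} : ⟨u, w⟩ ∈ B}). -/

import Mathlib

open MeasureTheory
open scoped RealInnerProductSpace

/-- `σ` is the uniform (normalized rotation-invariant) probability measure on the unit sphere
`S^{d−1} ⊆ ℝ^d`, viewed as a measure on `ℝ^d` concentrated on the sphere. -/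
def IsUniformSphereMeasure (d : ℕ) (σ : Measure (EuclideanSpace ℝ (Fin d))) : Prop :=
  IsProbabilityMeasure σ ∧ σ (Metric.sphere (0 : EuclideanSpace ℝ (Fin d)) 1) = 1 ∧
    ∀ O : EuclideanSpace ℝ (Fin d) ≃ₗᵢ[ℝ] EuclideanSpace ℝ (Fin d), Measure.map (⇑O) σ = σ

/-- Rotation invariance: the distribution of `⟪v, ·⟫` under `σ` depends only on `‖v‖`. -/
lemma slice_invariant {d : ℕ} (σ : Measure (EuclideanSpace ℝ (Fin d)))
    (hσ : ∀ O : EuclideanSpace ℝ (Fin d) ≃ₗᵢ[ℝ] EuclideanSpace ℝ (Fin d),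
      Measure.map (⇑O) σ = σ)
    {u v : EuclideanSpace ℝ (Fin d)} (huv : ‖u‖ = ‖v‖) (B : Set ℝ) (hB : MeasurableSet B) :
    σ {w | ⟪v, w⟫ ∈ B} = σ {w | ⟪u, w⟫ ∈ B} := by
  set O : EuclideanSpace ℝ (Fin d) ≃ₗᵢ[ℝ] EuclideanSpace ℝ (Fin d) :=
    Submodule.reflection (ℝ ∙ (u - v))ᗮ with hOdef
  have hOu : O u = v := Submodule.reflection_sub huv
  have hm : MeasurableSet {w : EuclideanSpace ℝ (Fin d) | ⟪v, w⟫ ∈ B} :=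
    (measurable_const.inner measurable_id) hB
  calc σ {w | ⟪v, w⟫ ∈ B} = (Measure.map (⇑O) σ) {w | ⟪v, w⟫ ∈ B} := by rw [hσ O]
    _ = σ ((⇑O) ⁻¹' {w | ⟪v, w⟫ ∈ B}) :=
        Measure.map_apply O.continuous.measurable hm
    _ = σ {w | ⟪u, w⟫ ∈ B} := by
        congr 1
        ext w
        simp only [Set.mem_preimage, Set.mem_setOf_eq, ← hOu, O.inner_map_map]

/-- There are infinitely many unit vectors in dimension at least 2. -/
lemma unit_family {d : ℕ} (hd : 2 ≤ d) :
    ∃ g : ℕ → EuclideanSpace ℝ (Fin d), Function.Injective g ∧ ∀ n, ‖g n‖ = 1 := by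
  set i0 : Fin d := ⟨0, by omega⟩
  set i1 : Fin d := ⟨1, by omega⟩
  have hne : i0 ≠ i1 := by simp [i0, i1, Fin.ext_iff]
  set v : ℕ → EuclideanSpace ℝ (Fin d) := fun n =>
    EuclideanSpace.single i0 (1 : ℝ) + EuclideanSpace.single i1 (n : ℝ) with hv
  have hnorm : ∀ n, ‖v n‖ = Real.sqrt (1 + (n : ℝ) ^ 2) := by
    intro n
    have h2 : ⟪v n, v n⟫ = 1 + (n:ℝ)^2 := by
      rw [hv]; dsimp only; rw [inner_add_add_self]
      simp [hv, inner_add_add_self, EuclideanSpace.inner_single_left,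
        EuclideanSpace.single_apply, hne, hne.symm]
    rw [← Real.sqrt_sq (norm_nonneg _), ← real_inner_self_eq_norm_sq, h2]
  refine ⟨fun n => (Real.sqrt (1 + (n:ℝ)^2))⁻¹ • v n, ?_, ?_⟩
  · intro n m h
    have hc : ∀ k : ℕ, (0:ℝ) < Real.sqrt (1 + (k:ℝ)^2) := fun k =>
      Real.sqrt_pos.2 (by positivity)
    have h0 := congrFun (congrArg (fun (x : EuclideanSpace ℝ (Fin d)) => (x : Fin d → ℝ)) h) i0
    have h1 := congrFun (congrArg (fun (x : EuclideanSpace ℝ (Fin d)) => (x : Fin d → ℝ)) h) i1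
    simp [hv, EuclideanSpace.single_apply, hne, hne.symm] at h0 h1
    have hcc : Real.sqrt (1 + (n:ℝ)^2) = Real.sqrt (1 + (m:ℝ)^2) := by
      have := h0
      field_simp at this
      linarith [this]
    rw [hcc] at h1
    have : (n:ℝ) = m := by
      have := mul_left_cancel₀ (inv_ne_zero (hc m).ne') h1
      exact this
    exact_mod_cast this
  · intro n
    rw [norm_smul, hnorm, Real.norm_eq_abs]
    have hc : (0:ℝ) < Real.sqrt (1 + (n:ℝ)^2) := Real.sqrt_pos.2 (by positivity)
    rw [abs_of_nonneg (inv_nonneg.2 hc.le), inv_mul_cancel₀ hc.ne']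

/-- For `d ≥ 2`, the uniform sphere measure has no atoms. -/
lemma atom_zero {d : ℕ} (hd : 2 ≤ d) (σ : Measure (EuclideanSpace ℝ (Fin d)))
    (hσ : IsUniformSphereMeasure d σ) (p : EuclideanSpace ℝ (Fin d)) : σ {p} = 0 := by
  obtain ⟨hprob, hsph, hinv⟩ := hσ
  haveI := hprob
  have hunit : ∀ q : EuclideanSpace ℝ (Fin d), ‖q‖ = 1 → σ {q} = σ {p} ∨ ‖p‖ ≠ 1 := by
    intro q hq
    by_cases hp : ‖p‖ = 1
    · left
      set O : EuclideanSpace ℝ (Fin d) ≃ₗᵢ[ℝ] EuclideanSpace ℝ (Fin d) :=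
        Submodule.reflection (ℝ ∙ (p - q))ᗮ with hOdef
      have hOp : O p = q := Submodule.reflection_sub (hp.trans hq.symm)
      have hpre : (⇑O) ⁻¹' {q} = {p} := by
        ext w
        simp only [Set.mem_preimage, Set.mem_singleton_iff, ← hOp]
        exact ⟨fun h => O.injective h, fun h => by rw [h]⟩
      calc σ {q} = (Measure.map (⇑O) σ) {q} := by rw [hinv O]
        _ = σ ((⇑O) ⁻¹' {q}) :=
            Measure.map_apply O.continuous.measurable (measurableSet_singleton q)
        _ = σ {p} := by rw [hpre]
    · right; exact hp
  by_cases hp : ‖p‖ = 1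
  · obtain ⟨g, hginj, hgnorm⟩ := unit_family hd
    by_contra hne
    have hdisj : Pairwise
        (Function.onFun Disjoint fun n => ({g n} : Set (EuclideanSpace ℝ (Fin d)))) := by
      intro n m hnm
      simp only [Function.onFun, Set.disjoint_singleton]
      exact fun h => hnm (hginj h)
    have hU := measure_iUnion hdisj (fun n => measurableSet_singleton (g n)) (μ := σ)
    have heq : ∀ n, σ {g n} = σ {p} := fun n =>
      ((hunit (g n) (hgnorm n)).resolve_right (fun h => h hp))
    rw [tsum_congr heq] at hU
    rw [ENNReal.tsum_const_eq_top_of_ne_zero hne] at hU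
    have hle : σ (⋃ n, {g n}) ≤ 1 := prob_le_one
    rw [hU] at hle
    simp at hle
  · have hsub : ({p} : Set (EuclideanSpace ℝ (Fin d))) ⊆
        (Metric.sphere (0 : EuclideanSpace ℝ (Fin d)) 1)ᶜ := by
      intro w hw
      simp only [Set.mem_singleton_iff] at hw
      subst hw
      simp only [Set.mem_compl_iff, Metric.mem_sphere, dist_zero_right]
      exact hp
    refine le_antisymm ?_ zero_le
    calc σ {p} ≤ σ (Metric.sphere (0 : EuclideanSpace ℝ (Fin d)) 1)ᶜ := measure_mono hsub
      _ = 1 - 1 := by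
          rw [measure_compl Metric.isClosed_sphere.measurableSet (measure_ne_top σ _), hsph,
            measure_univ]
      _ = 0 := by simp

/-- For `x, y, z` i.i.d. uniform on `S^{d−1}` (`d ≥ 2`), a fixed unit vector `u`, and Borel
sets `A, B ⊆ ℝ`:
`Pr[⟨x,y⟩ ∈ A ∧ x ≠ y ∧ ⟨(x−y)/‖x−y‖, z⟩ ∈ B] = Pr[⟨x,y⟩ ∈ A] · σ_d({w : ⟨u,w⟩ ∈ B})`. -/
theorem inner_diff_factorization {d : ℕ} (hd : 2 ≤ d)
    (σ : Measure (EuclideanSpace ℝ (Fin d))) (hσ : IsUniformSphereMeasure d σ)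
    (u : EuclideanSpace ℝ (Fin d)) (hu : ‖u‖ = 1)
    (A B : Set ℝ) (hA : MeasurableSet A) (hB : MeasurableSet B) :
    (σ.prod (σ.prod σ))
        {q : EuclideanSpace ℝ (Fin d) ×
            EuclideanSpace ℝ (Fin d) × EuclideanSpace ℝ (Fin d) |
          ⟪q.1, q.2.1⟫ ∈ A ∧ q.1 ≠ q.2.1 ∧
            ⟪‖q.1 - q.2.1‖⁻¹ • (q.1 - q.2.1), q.2.2⟫ ∈ B} =
      (σ.prod σ) {q : EuclideanSpace ℝ (Fin d) × EuclideanSpace ℝ (Fin d) | ⟪q.1, q.2⟫ ∈ A} *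
        σ {w | ⟪u, w⟫ ∈ B} := by
  haveI := hσ.1
  set c := σ {w : EuclideanSpace ℝ (Fin d) | ⟪u, w⟫ ∈ B} with hc
  set S : Set (EuclideanSpace ℝ (Fin d) ×
      EuclideanSpace ℝ (Fin d) × EuclideanSpace ℝ (Fin d)) :=
    {q | ⟪q.1, q.2.1⟫ ∈ A ∧ q.1 ≠ q.2.1 ∧
      ⟪‖q.1 - q.2.1‖⁻¹ • (q.1 - q.2.1), q.2.2⟫ ∈ B} with hS
  set T : Set (EuclideanSpace ℝ (Fin d) × EuclideanSpace ℝ (Fin d)) :=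
    {p | ⟪p.1, p.2⟫ ∈ A ∧ p.1 ≠ p.2} with hT
  -- measurability
  have hm1 : Measurable fun q : EuclideanSpace ℝ (Fin d) ×
      EuclideanSpace ℝ (Fin d) × EuclideanSpace ℝ (Fin d) => ⟪q.1, q.2.1⟫ :=
    measurable_fst.inner measurable_snd.fst
  have hmdiff : Measurable fun q : EuclideanSpace ℝ (Fin d) ×
      EuclideanSpace ℝ (Fin d) × EuclideanSpace ℝ (Fin d) => q.1 - q.2.1 :=
    measurable_fst.sub measurable_snd.fst
  have hm3 : Measurable fun q : EuclideanSpace ℝ (Fin d) ×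
      EuclideanSpace ℝ (Fin d) × EuclideanSpace ℝ (Fin d) =>
      ⟪‖q.1 - q.2.1‖⁻¹ • (q.1 - q.2.1), q.2.2⟫ :=
    (hmdiff.norm.inv.smul hmdiff).inner measurable_snd.snd
  have hmeqT : MeasurableSet {q : EuclideanSpace ℝ (Fin d) ×
      EuclideanSpace ℝ (Fin d) × EuclideanSpace ℝ (Fin d) | q.1 = q.2.1} :=
    measurableSet_eq_fun measurable_fst measurable_snd.fst
  have hMS : MeasurableSet S := by
    refine (hm1 hA).inter (hmeqT.compl.inter (hm3 hB))
  have hmT : MeasurableSet T :=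
    ((measurable_fst.inner measurable_snd) hA).inter
      (measurableSet_eq_fun measurable_fst measurable_snd).compl
  have hmA : MeasurableSet
      {p : EuclideanSpace ℝ (Fin d) × EuclideanSpace ℝ (Fin d) | ⟪p.1, p.2⟫ ∈ A} :=
    (measurable_fst.inner measurable_snd) hA
  -- key slice computation
  have key : ∀ x y : EuclideanSpace ℝ (Fin d),
      σ {z : EuclideanSpace ℝ (Fin d) |
          ⟪x, y⟫ ∈ A ∧ x ≠ y ∧ ⟪‖x - y‖⁻¹ • (x - y), z⟫ ∈ B}
        = T.indicator (fun _ => c) (x, y) := by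
    intro x y
    by_cases h : ⟪x, y⟫ ∈ A ∧ x ≠ y
    · have hset : {z : EuclideanSpace ℝ (Fin d) |
            ⟪x, y⟫ ∈ A ∧ x ≠ y ∧ ⟪‖x - y‖⁻¹ • (x - y), z⟫ ∈ B}
          = {z : EuclideanSpace ℝ (Fin d) | ⟪‖x - y‖⁻¹ • (x - y), z⟫ ∈ B} := by
        ext z
        simp only [Set.mem_setOf_eq]
        exact ⟨fun hh => hh.2.2, fun hz => ⟨h.1, h.2, hz⟩⟩
      have hvnorm : ‖u‖ = ‖‖x - y‖⁻¹ • (x - y)‖ := by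
        have hxy : x - y ≠ 0 := sub_ne_zero.mpr h.2
        rw [norm_smul, Real.norm_eq_abs, abs_of_nonneg (inv_nonneg.2 (norm_nonneg _)),
          inv_mul_cancel₀ (norm_ne_zero_iff.mpr hxy), hu]
      rw [hset, slice_invariant σ hσ.2.2 hvnorm B hB,
        Set.indicator_of_mem (by exact h) _]
    · have hset : {z : EuclideanSpace ℝ (Fin d) |
            ⟪x, y⟫ ∈ A ∧ x ≠ y ∧ ⟪‖x - y‖⁻¹ • (x - y), z⟫ ∈ B}
          = (∅ : Set (EuclideanSpace ℝ (Fin d))) := by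
        ext z; simp only [Set.mem_setOf_eq, Set.mem_empty_iff_false, iff_false]
        tauto
      rw [hset, measure_empty, Set.indicator_of_notMem (by exact h) _]
  -- the diagonal is null
  have hdiag : (σ.prod σ)
      {p : EuclideanSpace ℝ (Fin d) × EuclideanSpace ℝ (Fin d) | p.1 = p.2} = 0 := by
    rw [Measure.prod_apply (measurableSet_eq_fun measurable_fst measurable_snd)]
    have h0 : ∀ x : EuclideanSpace ℝ (Fin d),
        σ (Prod.mk x ⁻¹' {p : EuclideanSpace ℝ (Fin d) ×
          EuclideanSpace ℝ (Fin d) | p.1 = p.2}) = 0 := by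
      intro x
      have : Prod.mk x ⁻¹' {p : EuclideanSpace ℝ (Fin d) ×
          EuclideanSpace ℝ (Fin d) | p.1 = p.2} = {x} := by
        ext w; simp [eq_comm]
      rw [this]; exact atom_zero hd σ hσ x
    rw [lintegral_congr h0, lintegral_zero]
  have hTA : (σ.prod σ) T = (σ.prod σ)
      {p : EuclideanSpace ℝ (Fin d) × EuclideanSpace ℝ (Fin d) | ⟪p.1, p.2⟫ ∈ A} := by
    refine le_antisymm (measure_mono fun p hp => hp.1) ?_
    calc (σ.prod σ) {p : EuclideanSpace ℝ (Fin d) ×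
          EuclideanSpace ℝ (Fin d) | ⟪p.1, p.2⟫ ∈ A}
        ≤ (σ.prod σ) (T ∪ {p : EuclideanSpace ℝ (Fin d) ×
            EuclideanSpace ℝ (Fin d) | p.1 = p.2}) := by
          refine measure_mono fun p hp => ?_
          by_cases hpq : p.1 = p.2
          · exact Or.inr hpq
          · exact Or.inl ⟨hp, hpq⟩
      _ ≤ (σ.prod σ) T + (σ.prod σ) {p : EuclideanSpace ℝ (Fin d) ×
            EuclideanSpace ℝ (Fin d) | p.1 = p.2} := measure_union_le _ _
      _ = (σ.prod σ) T := by rw [hdiag, add_zero]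
  -- main computation
  calc (σ.prod (σ.prod σ)) S
      = ∫⁻ x, (σ.prod σ) (Prod.mk x ⁻¹' S) ∂σ := Measure.prod_apply hMS
    _ = ∫⁻ x, ∫⁻ y, σ (Prod.mk y ⁻¹' (Prod.mk x ⁻¹' S)) ∂σ ∂σ := by
        refine lintegral_congr fun x => Measure.prod_apply (measurable_prodMk_left hMS)
    _ = ∫⁻ x, ∫⁻ y, T.indicator (fun _ => c) (x, y) ∂σ ∂σ := by
        refine lintegral_congr fun x => lintegral_congr fun y => ?_
        have : Prod.mk y ⁻¹' (Prod.mk x ⁻¹' S)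
            = {z : EuclideanSpace ℝ (Fin d) |
                ⟪x, y⟫ ∈ A ∧ x ≠ y ∧ ⟪‖x - y‖⁻¹ • (x - y), z⟫ ∈ B} := rfl
        rw [this, key x y]
    _ = ∫⁻ p, T.indicator (fun _ => c) p ∂(σ.prod σ) := by
        refine (lintegral_prod _ ?_).symm
        exact (measurable_const.indicator hmT).aemeasurable
    _ = c * (σ.prod σ) T := lintegral_indicator_const hmT c
    _ = (σ.prod σ) {p : EuclideanSpace ℝ (Fin d) ×
          EuclideanSpace ℝ (Fin d) | ⟪p.1, p.2⟫ ∈ A} * c := by rw [hTA, mul_comm]
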